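/- Let p be a prime and D > 1 an integer such that −D is not a square modulo p, and let τ = √D·i ∈ ℂ (so τ² = −D and τ lies in the upper half-plane). Let M and M' be 2×2 integer matrices with det M = pⁿ and det M' = pᵐ for some natural numbers n, m ≥ 0. If M and M' send τ to the same point under the Möbius action on the upper half-plane (i.e. M·τ = M'·τ), then there exists a nonzero rational number λ such that M = λ·M' as matrices. -/

import Mathlib

lemma descent_aux (p : ℕ) (hp : p.Prime) (D : ℤ) (hD1 : 1 < D)
    (hD : ¬ IsSquare ((-D : ℤ) : ZMod p)) :
    ∀ k : ℕ, ∀ A C : ℤ, A ^ 2 + D * C ^ 2 = (p : ℤ) ^ k → C = 0 := by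
  haveI : Fact p.Prime := ⟨hp⟩
  intro k
  induction k using Nat.strong_induction_on with
  | _ k ih =>
  intro A C h
  match k with
  | 0 =>
    by_contra hC
    have h0 : 0 < C ^ 2 := lt_of_le_of_ne (sq_nonneg C) (Ne.symm (pow_ne_zero 2 hC))
    nlinarith [sq_nonneg A]
  | 1 =>
    by_contra hC
    have hpC : (p : ℤ) ∣ C := by
      by_contra hpc
      apply hD
      have hCz : ((C : ZMod p)) ≠ 0 := by
        simpa [ZMod.intCast_zmod_eq_zero_iff_dvd] using hpc
      have hz : ((A : ZMod p)) ^ 2 + (D : ZMod p) * (C : ZMod p) ^ 2 = 0 := by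
        have := congrArg (fun x : ℤ => (x : ZMod p)) h
        push_cast at this
        simpa [pow_succ] using this.trans (by simp)
      refine ⟨(A : ZMod p) * (C : ZMod p)⁻¹, ?_⟩
      have hCinv : (C : ZMod p) * (C : ZMod p)⁻¹ = 1 := ZMod.mul_inv_of_unit _ (Ne.isUnit hCz)
      push_cast
      field_simp
      linear_combination -hz
    obtain ⟨C1, rfl⟩ := hpC
    have hpA : (p : ℤ) ∣ A := by
      have : (p:ℤ) ∣ A ^ 2 := ⟨(p:ℤ)^0 - D * p * C1^2, by linear_combination h⟩
      exact (Nat.prime_iff_prime_int.mp hp).dvd_of_dvd_pow this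
    obtain ⟨A1, rfl⟩ := hpA
    have hp1 : (1:ℤ) < p := by exact_mod_cast hp.one_lt
    have hdvd : (p:ℤ)^2 ∣ (p:ℤ) := ⟨A1^2 + D*C1^2, by linear_combination -h⟩
    have := Int.le_of_dvd (by linarith) hdvd
    nlinarith
  | (k+2) =>
    have hpC : (p : ℤ) ∣ C := by
      by_contra hpc
      apply hD
      have hCz : ((C : ZMod p)) ≠ 0 := by
        simpa [ZMod.intCast_zmod_eq_zero_iff_dvd] using hpc
      have hz : ((A : ZMod p)) ^ 2 + (D : ZMod p) * (C : ZMod p) ^ 2 = 0 := by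
        have := congrArg (fun x : ℤ => (x : ZMod p)) h
        push_cast at this
        simpa [pow_succ] using this.trans (by simp [pow_succ])
      refine ⟨(A : ZMod p) * (C : ZMod p)⁻¹, ?_⟩
      have hCinv : (C : ZMod p) * (C : ZMod p)⁻¹ = 1 := ZMod.mul_inv_of_unit _ (Ne.isUnit hCz)
      push_cast
      field_simp
      linear_combination -hz
    obtain ⟨C1, rfl⟩ := hpC
    have hpA : (p : ℤ) ∣ A := by
      have : (p:ℤ) ∣ A ^ 2 := ⟨(p:ℤ)^(k+1) - D * p * C1^2, by ring_nf; linear_combination h⟩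
      exact (Nat.prime_iff_prime_int.mp hp).dvd_of_dvd_pow this
    obtain ⟨A1, rfl⟩ := hpA
    have hp0 : (p:ℤ) ≠ 0 := by exact_mod_cast hp.ne_zero
    have h' : A1 ^ 2 + D * C1 ^ 2 = (p:ℤ) ^ k := by
      have h2 : (p:ℤ)^2 * (A1 ^ 2 + D * C1 ^ 2) = (p:ℤ)^2 * (p:ℤ)^k := by
        ring_nf; linear_combination h
      exact mul_left_cancel₀ (pow_ne_zero 2 hp0) h2
    have := ih k (by omega) A1 C1 h'
    simp [this]

/-- Let `p` be a prime and `D > 1` an integer with `−D` not a square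
modulo `p`, and let `τ = √D·i`. If `M, M'` are integer `2×2` matrices with `det M = pⁿ`,
`det M' = pᵐ` sending `τ` to the same point under the Möbius action on the upper half-plane,
then `M = λ·M'` for some nonzero rational `λ`. -/
theorem moebius_eq_implies_proportional (p : ℕ) (hp : p.Prime) (D : ℤ) (hD1 : 1 < D)
    (hD : ¬ IsSquare ((-D : ℤ) : ZMod p))
    (M M' : Matrix (Fin 2) (Fin 2) ℤ) (n m : ℕ)
    (hdM : M.det = (p : ℤ) ^ n) (hdM' : M'.det = (p : ℤ) ^ m)
    (heq :
      ((M 0 0 : ℂ) * (Real.sqrt (D : ℝ) * Complex.I) + (M 0 1 : ℂ)) /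
          ((M 1 0 : ℂ) * (Real.sqrt (D : ℝ) * Complex.I) + (M 1 1 : ℂ)) =
        ((M' 0 0 : ℂ) * (Real.sqrt (D : ℝ) * Complex.I) + (M' 0 1 : ℂ)) /
          ((M' 1 0 : ℂ) * (Real.sqrt (D : ℝ) * Complex.I) + (M' 1 1 : ℂ))) :
    ∃ l : ℚ, l ≠ 0 ∧ ∀ i j : Fin 2, (M i j : ℚ) = l * (M' i j : ℚ) := by
  set s : ℝ := Real.sqrt (D : ℝ) with hs
  have hD0 : (0:ℝ) ≤ (D:ℝ) := by exact_mod_cast le_of_lt (lt_trans one_pos hD1)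
  have hs2 : s * s = (D : ℝ) := Real.mul_self_sqrt hD0
  have hs0 : 0 < s := Real.sqrt_pos.mpr (by exact_mod_cast lt_trans one_pos hD1)
  have hden : ∀ N : Matrix (Fin 2) (Fin 2) ℤ, N.det ≠ 0 →
      ((N 1 0 : ℂ) * (s * Complex.I) + (N 1 1 : ℂ)) ≠ 0 := by
    intro N hN h0
    have him := congrArg Complex.im h0
    have hre := congrArg Complex.re h0
    simp [Complex.add_im, Complex.mul_im, Complex.add_re, Complex.mul_re] at him hre
    have h10 : (N 1 0 : ℝ) = 0 := by
      rcases him with h | h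
      · exact_mod_cast h
      · exact absurd h (ne_of_gt hs0)
    have h10' : N 1 0 = 0 := by exact_mod_cast h10
    have h11 : N 1 1 = 0 := by exact_mod_cast hre
    apply hN
    rw [Matrix.det_fin_two, h10', h11]; ring
  have hpz : ((p:ℤ)) ≠ 0 := by exact_mod_cast hp.ne_zero
  have hp0 : ((p:ℤ))^n ≠ 0 := pow_ne_zero _ hpz
  have hp0' : ((p:ℤ))^m ≠ 0 := pow_ne_zero _ hpz
  rw [div_eq_div_iff (hden M (hdM ▸ hp0)) (hden M' (hdM' ▸ hp0'))] at heq
  have him := congrArg Complex.im heq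
  have hre := congrArg Complex.re heq
  simp [Complex.add_im, Complex.mul_im, Complex.add_re, Complex.mul_re] at him hre
  have E1 : (M 0 1) * (M' 1 1) - D * (M 0 0 * M' 1 0)
      = M' 0 1 * M 1 1 - D * (M' 0 0 * M 1 0) := by
    have : ((M 0 1 * M' 1 1 - D * (M 0 0 * M' 1 0) : ℤ) : ℝ)
        = ((M' 0 1 * M 1 1 - D * (M' 0 0 * M 1 0) : ℤ) : ℝ) := by
      push_cast
      linear_combination hre + (((M 0 0 : ℝ) * M' 1 0) - (M' 0 0 : ℝ) * M 1 0) * hs2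
    exact_mod_cast this
  have E2 : M 0 0 * M' 1 1 + M 0 1 * M' 1 0 = M' 0 0 * M 1 1 + M' 0 1 * M 1 0 := by
    have h2 : ((M 0 0 * M' 1 1 + M 0 1 * M' 1 0 : ℤ) : ℝ) * s
        = ((M' 0 0 * M 1 1 + M' 0 1 * M 1 0 : ℤ) : ℝ) * s := by
      push_cast
      linear_combination him
    have := mul_right_cancel₀ (ne_of_gt hs0) h2
    exact_mod_cast this
  -- N = adjugate M' * M
  set N : Matrix (Fin 2) (Fin 2) ℤ := M'.adjugate * M with hN
  have hadj : M'.adjugate = Matrix.of !![M' 1 1, -(M' 0 1); -(M' 1 0), M' 0 0] :=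
    Matrix.adjugate_fin_two M'
  have hN00 : N 0 0 = M' 1 1 * M 0 0 - M' 0 1 * M 1 0 := by
    simp [hN, Matrix.adjugate_fin_two, Matrix.mul_apply, Matrix.vecMul, dotProduct, Fin.sum_univ_two]; ring
  have hN01 : N 0 1 = M' 1 1 * M 0 1 - M' 0 1 * M 1 1 := by
    simp [hN, Matrix.adjugate_fin_two, Matrix.mul_apply, Matrix.vecMul, dotProduct, Fin.sum_univ_two]; ring
  have hN10 : N 1 0 = M' 0 0 * M 1 0 - M' 1 0 * M 0 0 := by
    simp [hN, Matrix.adjugate_fin_two, Matrix.mul_apply, Matrix.vecMul, dotProduct, Fin.sum_univ_two]; ring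
  have hN11 : N 1 1 = M' 0 0 * M 1 1 - M' 1 0 * M 0 1 := by
    simp [hN, Matrix.adjugate_fin_two, Matrix.mul_apply, Matrix.vecMul, dotProduct, Fin.sum_univ_two]; ring
  have hNdiag : N 1 1 = N 0 0 := by rw [hN11, hN00]; linear_combination -E2
  have hNoff : N 0 1 = -(D * N 1 0) := by rw [hN01, hN10]; linear_combination E1
  have hsum : (N 0 0) ^ 2 + D * (N 1 0) ^ 2 = (p : ℤ) ^ (n + m) := by
    have hdet : N 0 0 * N 1 1 - N 0 1 * N 1 0 = M'.det * M.det := by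
      rw [hN00, hN01, hN10, hN11, Matrix.det_fin_two M, Matrix.det_fin_two M']; ring
    rw [hNdiag, hNoff, hdM, hdM'] at hdet
    rw [pow_add]
    linear_combination hdet
  have hC0 : N 1 0 = 0 := descent_aux p hp D hD1 hD (n + m) (N 0 0) (N 1 0) hsum
  have hA2 : (N 0 0) ^ 2 = (p:ℤ) ^ (n + m) := by rw [← hsum, hC0]; ring
  have hAne : N 0 0 ≠ 0 := by
    intro h
    rw [h] at hA2
    exact (pow_ne_zero (n+m) hpz) (by linarith [hA2.symm])
  have hNid : N = (N 0 0) • (1 : Matrix (Fin 2) (Fin 2) ℤ) := by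
    ext i j
    fin_cases i <;> fin_cases j <;>
      simp [Matrix.smul_apply, Matrix.one_apply, hNdiag, hNoff, hC0]
  have hkey : ∀ i j : Fin 2, (p:ℤ)^m * M i j = (N 0 0) * M' i j := by
    have h1 : M' * N = ((p:ℤ)^m) • M := by
      rw [hN, ← Matrix.mul_assoc, Matrix.mul_adjugate, hdM', Matrix.smul_mul, Matrix.one_mul]
    have h2 : M' * N = (N 0 0) • M' := by
      have := congrArg (fun X => M' * X) hNid
      simpa only [Matrix.mul_smul, Matrix.mul_one] using this
    intro i j
    have := congrArg (fun X : Matrix (Fin 2) (Fin 2) ℤ => X i j) (h1.symm.trans h2)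
    simpa [Matrix.smul_apply] using this
  refine ⟨(N 0 0 : ℚ) / ((p:ℚ)^m), ?_, ?_⟩
  · apply div_ne_zero
    · exact_mod_cast hAne
    · exact pow_ne_zero _ (by exact_mod_cast hp.ne_zero)
  · intro i j
    have := hkey i j
    have hq : ((p:ℚ))^m * (M i j : ℚ) = ((N 0 0 : ℤ):ℚ) * (M' i j : ℚ) := by exact_mod_cast this
    have hpq : ((p:ℚ))^m ≠ 0 := pow_ne_zero _ (by exact_mod_cast hp.ne_zero)
    field_simp
    linear_combination hq
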